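/- For a compact H-set of positive N×N matrices 𝒜 and a vector x > 0 (all coordinates positive), there exists a matrix A_max ∈ 𝒜 such that A x ≤ A_max x (coordinate-wise) for all A ∈ 𝒜. -/

import Mathlib

/-- A vector is positive if all its coordinates are strictly positive. -/
def PosVec {M : ℕ} (x : Fin M → ℝ) : Prop := ∀ j, 0 < x j

/-- A matrix is positive if all its entries are strictly positive. -/
def PosMat {N M : ℕ} (A : Matrix (Fin N) (Fin M) ℝ) : Prop := ∀ i j, 0 < A i j

/-- The hourglass alternative: a set of matrices is an H-set if for every
matrix `At` in the set and every positive vector `x`, assertions H1 and H2 hold. -/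
def IsHSet {N M : ℕ} (𝒜 : Set (Matrix (Fin N) (Fin M) ℝ)) : Prop :=
  ∀ At ∈ 𝒜, ∀ x : Fin M → ℝ, PosVec x →
    ((∀ A ∈ 𝒜, At.mulVec x ≤ A.mulVec x) ∨
      ∃ Ab ∈ 𝒜, Ab.mulVec x ≤ At.mulVec x ∧ Ab.mulVec x ≠ At.mulVec x) ∧
    ((∀ A ∈ 𝒜, A.mulVec x ≤ At.mulVec x) ∨
      ∃ Ab ∈ 𝒜, At.mulVec x ≤ Ab.mulVec x ∧ Ab.mulVec x ≠ At.mulVec x)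

/-- For a compact H-set of positive matrices and a positive vector `x`, there
is a matrix `Amax` in the set maximizing `A x` coordinate-wise. -/
theorem exists_max_matrix {N : ℕ} (𝒜 : Set (Matrix (Fin N) (Fin N) ℝ))
    (hne : 𝒜.Nonempty) (hpos : ∀ A ∈ 𝒜, PosMat A) (hH : IsHSet 𝒜)
    (hcomp : IsCompact 𝒜) (x : Fin N → ℝ) (hx : PosVec x) :
    ∃ Amax ∈ 𝒜, ∀ A ∈ 𝒜, A.mulVec x ≤ Amax.mulVec x := by
  have hcont : Continuous (fun A : Matrix (Fin N) (Fin N) ℝ => ∑ i, A.mulVec x i) := by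
    simp only [Matrix.mulVec, dotProduct]
    apply continuous_finset_sum
    intro i _
    apply continuous_finset_sum
    intro j _
    exact (continuous_id.matrix_elem i j).mul continuous_const
  obtain ⟨At, hAt, hmax⟩ := hcomp.exists_isMaxOn hne hcont.continuousOn
  rcases (hH At hAt x hx).2 with h | ⟨Ab, hAb, hle, hne'⟩
  · exact ⟨At, hAt, h⟩
  · exfalso
    have hsum : ∑ i, At.mulVec x i < ∑ i, Ab.mulVec x i := by
      apply Finset.sum_lt_sum (fun i _ => hle i)
      obtain ⟨i, hi⟩ : ∃ i, At.mulVec x i ≠ Ab.mulVec x i := by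
        by_contra h; push_neg at h
        exact hne' (funext fun i => (h i).symm)
      exact ⟨i, Finset.mem_univ i, lt_of_le_of_ne (hle i) hi⟩
    exact absurd (hmax hAb) (not_le.mpr hsum)
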